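/- Let X be a random variable on the d-simplex with mean μ = E[X]. Let H* be the convex piecewise-linear function whose epigraph is the convex hull of the points (μ, 0) and (ê_k, 1) for all vertices ê_k of the simplex. Then for every convex H : Δ_d → [0,1], the Jensen gap satisfies E[H(X)] − H(E[X]) ≤ E[H*(X)] − H*(E[X]). -/

import Mathlib

open MeasureTheory Finset

/-- The upside-down pyramid `H*`, whose epigraph (below height 1) is the
convex hull of (μ,0) and the vertices (ê_k, 1), maximizes the Jensen gap among all
convex functions Δ_d → [0,1]. -/
theorem singleton_pyramid_optimal {d : ℕ} {α : Type*} [MeasurableSpace α]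
    (P : Measure α) [IsProbabilityMeasure P]
    (X : α → Fin d → ℝ) (hX : ∀ s, X s ∈ stdSimplex ℝ (Fin d))
    (μ : Fin d → ℝ) (hμ : ∀ i, μ i = ∫ s, X s i ∂P)
    (hμΔ : μ ∈ stdSimplex ℝ (Fin d))
    (Hstar : (Fin d → ℝ) → ℝ)
    (hHconv : ConvexOn ℝ (stdSimplex ℝ (Fin d)) Hstar)
    (hepi : {p : (Fin d → ℝ) × ℝ | p.1 ∈ stdSimplex ℝ (Fin d) ∧ Hstar p.1 ≤ p.2 ∧ p.2 ≤ 1}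
      = convexHull ℝ ({(μ, 0)} ∪
          {p : (Fin d → ℝ) × ℝ | ∃ k : Fin d, p = (fun i => if i = k then (1:ℝ) else 0, 1)}))
    (hintHstar : Integrable (fun s => Hstar (X s)) P)
    (H : (Fin d → ℝ) → ℝ) (hconv : ConvexOn ℝ (stdSimplex ℝ (Fin d)) H)
    (hbound : ∀ x ∈ stdSimplex ℝ (Fin d), H x ∈ Set.Icc (0:ℝ) 1)
    (hintH : Integrable (fun s => H (X s)) P) :
    (∫ s, H (X s) ∂P) - H μ ≤ (∫ s, Hstar (X s) ∂P) - Hstar μ := by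
  set S : Set ((Fin d → ℝ) × ℝ) := {(μ, 0)} ∪
      {p : (Fin d → ℝ) × ℝ | ∃ k : Fin d, p = (fun i => if i = k then (1:ℝ) else 0, 1)} with hS
  -- vertices are in the simplex
  have hvert : ∀ k : Fin d, (fun i => if i = k then (1:ℝ) else 0) ∈ stdSimplex ℝ (Fin d) := by
    intro k
    simpa [eq_comm] using ite_eq_mem_stdSimplex ℝ k
  -- Step 1: Hstar ≤ 1 on the simplex
  have hle1 : ∀ x ∈ stdSimplex ℝ (Fin d), Hstar x ≤ 1 := by
    intro x hx
    have hA : Convex ℝ {x : Fin d → ℝ | (x, (1:ℝ)) ∈ convexHull ℝ S} := by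
      intro x hx y hy a b ha hb hab
      have h := (convex_convexHull ℝ S) hx hy ha hb hab
      simpa [Prod.smul_mk, Prod.mk_add_mk, hab] using h
    have hxhull : (x, (1:ℝ)) ∈ convexHull ℝ S := by
      rw [← convexHull_basis_eq_stdSimplex] at hx
      refine convexHull_min ?_ hA hx
      rintro y ⟨k, rfl⟩
      refine subset_convexHull ℝ S (Or.inr ⟨k, ?_⟩)
      simp only [Set.mem_setOf_eq, Prod.mk.injEq, and_true]
      funext j
      by_cases h : j = k
      · simp [h]
      · simp [h, Ne.symm h]
    have : (x, (1:ℝ)) ∈ {p : (Fin d → ℝ) × ℝ |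
        p.1 ∈ stdSimplex ℝ (Fin d) ∧ Hstar p.1 ≤ p.2 ∧ p.2 ≤ 1} := by
      rw [hepi]; exact hxhull
    exact this.2.1
  -- Step 2: hull is above height 0
  have hpos : convexHull ℝ S ⊆ {p : (Fin d → ℝ) × ℝ | 0 ≤ p.2} := by
    apply convexHull_min
    · rintro p (rfl | ⟨k, rfl⟩)
      · exact le_refl (0:ℝ)
      · exact (zero_le_one : (0:ℝ) ≤ 1)
    · exact convex_halfSpace_ge (LinearMap.snd ℝ _ ℝ).isLinear 0
  -- Step 3: Hstar μ = 0
  have hμ0 : Hstar μ = 0 := by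
    have h1 : Hstar μ ≤ 0 := by
      have : (μ, (0:ℝ)) ∈ {p : (Fin d → ℝ) × ℝ |
          p.1 ∈ stdSimplex ℝ (Fin d) ∧ Hstar p.1 ≤ p.2 ∧ p.2 ≤ 1} := by
        rw [hepi]; exact subset_convexHull ℝ S (Or.inl rfl)
      exact this.2.1
    have h2 : 0 ≤ Hstar μ := by
      have : (μ, Hstar μ) ∈ convexHull ℝ S := by
        rw [← hepi]; exact ⟨hμΔ, le_refl _, hle1 μ hμΔ⟩
      exact hpos this
    linarith
  -- Step 4: pointwise H x - H μ ≤ Hstar x on the simplex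
  have hHμ0 : 0 ≤ H μ := (hbound μ hμΔ).1
  have hpt : ∀ x ∈ stdSimplex ℝ (Fin d), H x - H μ ≤ Hstar x := by
    intro x hx
    have hg : ConvexOn ℝ (stdSimplex ℝ (Fin d)) (fun y => H y - H μ) :=
      hconv.sub (concaveOn_const _ (convex_stdSimplex ℝ (Fin d)))
    have hT : convexHull ℝ S ⊆
        {p : (Fin d → ℝ) × ℝ | p.1 ∈ stdSimplex ℝ (Fin d) ∧ H p.1 - H μ ≤ p.2} := by
      apply convexHull_min
      · rintro p (rfl | ⟨k, rfl⟩)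
        · exact ⟨hμΔ, by simp⟩
        · exact ⟨hvert k, by
            have := (hbound _ (hvert k)).2
            simp only; linarith⟩
      · exact hg.convex_epigraph
    have hmem : (x, Hstar x) ∈ convexHull ℝ S := by
      rw [← hepi]; exact ⟨hx, le_refl _, hle1 x hx⟩
    exact (hT hmem).2
  -- Step 5: integrate
  have hint : (∫ s, (H (X s) - H μ) ∂P) ≤ ∫ s, Hstar (X s) ∂P :=
    integral_mono (hintH.sub (integrable_const _)) hintHstar fun s => hpt (X s) (hX s)
  rw [integral_sub hintH (integrable_const _), integral_const] at hint
  simp only [measure_univ, probReal_univ, ENNReal.toReal_one, one_smul, one_mul, smul_eq_mul] at hint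
  rw [hμ0]
  linarith
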